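/- For every n ≥ 3, the polynomial Rₙ(x) = n²·Cₙ^{(3/2)}(x) − (n+1)²·C_{n−2}^{(3/2)}(x) and the polynomial C_{n−1}^{(3/2)}(x) have no common root. -/

import Mathlib

/-- Gegenbauer polynomials `C_n^{(α)}` defined by the standard three-term
recurrence: `C_0 = 1`, `C_1 = 2αx`,
`(n+2) C_{n+2} = 2(n+1+α) x C_{n+1} − (n+2α) C_n`. -/
noncomputable def gegenbauer (α : ℝ) : ℕ → Polynomial ℝ
  | 0 => 1
  | 1 => Polynomial.C (2 * α) * Polynomial.X
  | (n + 2) =>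
      Polynomial.C (2 * ((n : ℝ) + 1 + α) / ((n : ℝ) + 2)) * Polynomial.X *
          gegenbauer α (n + 1) -
        Polynomial.C (((n : ℝ) + 2 * α) / ((n : ℝ) + 2)) * gegenbauer α n

lemma gegenbauer_eval_succ_succ (α : ℝ) (k : ℕ) (x : ℝ) :
    (gegenbauer α (k + 2)).eval x =
      2 * ((k : ℝ) + 1 + α) / ((k : ℝ) + 2) * x * (gegenbauer α (k + 1)).eval x -
        ((k : ℝ) + 2 * α) / ((k : ℝ) + 2) * (gegenbauer α k).eval x := by
  show (Polynomial.C (2 * ((k : ℝ) + 1 + α) / ((k : ℝ) + 2)) * Polynomial.X *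
          gegenbauer α (k + 1) -
        Polynomial.C (((k : ℝ) + 2 * α) / ((k : ℝ) + 2)) * gegenbauer α k).eval x = _
  simp

lemma geg_no_common (k : ℕ) (x : ℝ) :
    ¬((gegenbauer (3/2) (k + 1)).IsRoot x ∧ (gegenbauer (3/2) k).IsRoot x) := by
  induction k with
  | zero =>
    rintro ⟨_, h⟩
    simp [gegenbauer, Polynomial.IsRoot] at h
  | succ k ih =>
    rintro ⟨h2, h1⟩
    apply ih
    refine ⟨h1, ?_⟩
    have he := gegenbauer_eval_succ_succ (3/2) k x
    rw [Polynomial.IsRoot] at h2 h1 ⊢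
    rw [h2, h1] at he
    have hb : ((k : ℝ) + 2 * (3/2)) / ((k : ℝ) + 2) ≠ 0 := by
      have : (0:ℝ) < (k : ℝ) + 2 := by positivity
      have : (0:ℝ) < (k : ℝ) + 2 * (3/2) := by positivity
      positivity
    have h0 : ((k : ℝ) + 2 * (3/2)) / ((k : ℝ) + 2) * (gegenbauer (3/2) k).eval x = 0 := by
      linarith
    exact (mul_eq_zero.mp h0).resolve_left hb

/-- For n ≥ 3, Rₙ = n²·Cₙ^{(3/2)} − (n+1)²·C_{n−2}^{(3/2)} and C_{n−1}^{(3/2)}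
have no common root. -/
theorem c0_odd_nodes_disjoint (n : ℕ) (hn : 3 ≤ n) :
    ∀ x : ℝ,
      ¬(((n : ℝ) ^ 2 • gegenbauer (3/2) n -
          ((n : ℝ) + 1) ^ 2 • gegenbauer (3/2) (n - 2)).IsRoot x ∧
        (gegenbauer (3/2) (n - 1)).IsRoot x) := by
  intro x
  rintro ⟨hR, h1⟩
  obtain ⟨m, rfl⟩ : ∃ m, n = m + 2 := ⟨n - 2, by omega⟩
  have e2 : m + 2 - 2 = m := by omega
  have e1 : m + 2 - 1 = m + 1 := by omega
  rw [e2] at hR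
  rw [e1] at h1
  apply geg_no_common m x
  refine ⟨h1, ?_⟩
  rw [Polynomial.IsRoot] at hR h1 ⊢
  have he := gegenbauer_eval_succ_succ (3/2) m x
  rw [h1] at he
  simp only [Polynomial.eval_sub, Polynomial.eval_smul, smul_eq_mul] at hR
  rw [he] at hR
  have hm : (0:ℝ) < (m : ℝ) + 2 := by positivity
  have hc : ((m:ℝ)+2)^2 * (((m:ℝ) + 2 * (3/2)) / ((m:ℝ) + 2)) + ((m:ℝ)+2+1)^2 ≠ 0 := by
    have : (0:ℝ) < ((m:ℝ) + 2 * (3/2)) / ((m:ℝ) + 2) := by positivity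
    positivity
  push_cast at hR ⊢
  field_simp at hR
  have h0 : (((m:ℝ)+2)^2*((m:ℝ)+3) + ((m:ℝ)+2)*((m:ℝ)+2+1)^2) *
      (gegenbauer (3/2) m).eval x = 0 := by linear_combination -((m:ℝ)+2) * hR
  have hpos : (0:ℝ) < ((m:ℝ)+2)^2*((m:ℝ)+3) + ((m:ℝ)+2)*((m:ℝ)+2+1)^2 := by positivity
  exact (mul_eq_zero.mp h0).resolve_left hpos.ne'
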